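/- Let S = {(0,0),(0,1),(0,2),(1,2),(1,3),(2,2),(2,3),(3,0)}. The mesh patterns q1 = (123, S) and q2 = (132, S) are jointly equidistributed. -/

import Mathlib

/-- The boundary-extended sequence of positions of a candidate occurrence:
`posExt i 0 = 0`, `posExt i a = i (a-1) + 1` (1-based position) for `1 ≤ a ≤ m`,
and `posExt i (m+1) = n + 1`. -/
def posExt {m n : ℕ} (i : Fin m → Fin n) : ℕ → ℕ := fun a =>
  if h : 1 ≤ a ∧ a ≤ m then ((i ⟨a - 1, by omega⟩ : Fin n) : ℕ) + 1
  else if a = 0 then 0 else n + 1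

/-- The boundary-extended increasing rearrangement of the values of a candidate
occurrence: `valExt τ π i 0 = 0`, `valExt τ π i b = π (i (τ⁻¹ (b-1))) + 1`
(the `b`-th smallest value, 1-based) for `1 ≤ b ≤ m`, and `valExt τ π i (m+1) = n + 1`. -/
def valExt {m n : ℕ} (τ : Equiv.Perm (Fin m)) (π : Equiv.Perm (Fin n))
    (i : Fin m → Fin n) : ℕ → ℕ := fun b =>
  if h : 1 ≤ b ∧ b ≤ m then ((π (i (τ.symm ⟨b - 1, by omega⟩)) : Fin n) : ℕ) + 1
  else if b = 0 then 0 else n + 1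

/-- `i : Fin m → Fin n` is an occurrence of the mesh pattern `(τ, R)` in the
permutation `π` of `{1, …, n}` (positions and values are taken 1-based via `+1`). -/
def IsMeshOcc {m n : ℕ} (τ : Equiv.Perm (Fin m)) (R : Set (ℕ × ℕ))
    (π : Equiv.Perm (Fin n)) (i : Fin m → Fin n) : Prop :=
  StrictMono i ∧
  (∀ a b : Fin m, π (i a) < π (i b) ↔ τ a < τ b) ∧
  ∀ a b : ℕ, (a, b) ∈ R →
    ¬ ∃ j : Fin n,
        posExt i a < (j : ℕ) + 1 ∧ (j : ℕ) + 1 < posExt i (a + 1) ∧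
        valExt τ π i b < ((π j : Fin n) : ℕ) + 1 ∧
        ((π j : Fin n) : ℕ) + 1 < valExt τ π i (b + 1)

/-- The number of occurrences of the mesh pattern `(τ, R)` in `π`. -/
noncomputable def occ {m n : ℕ} (τ : Equiv.Perm (Fin m)) (R : Set (ℕ × ℕ))
    (π : Equiv.Perm (Fin n)) : ℕ :=
  Nat.card {i : Fin m → Fin n // IsMeshOcc τ R π i}

/-- Mesh patterns `(τ₁, R₁)` and `(τ₂, R₂)` are jointly equidistributed. -/
def JointlyEquidistributed {m₁ m₂ : ℕ} (τ₁ : Equiv.Perm (Fin m₁)) (R₁ : Set (ℕ × ℕ))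
    (τ₂ : Equiv.Perm (Fin m₂)) (R₂ : Set (ℕ × ℕ)) : Prop :=
  ∀ n k ℓ : ℕ,
    Nat.card {π : Equiv.Perm (Fin n) // occ τ₁ R₁ π = k ∧ occ τ₂ R₂ π = ℓ} =
    Nat.card {π : Equiv.Perm (Fin n) // occ τ₁ R₁ π = ℓ ∧ occ τ₂ R₂ π = k}

/-- The pattern 123 (identity on three letters). -/
def perm123 : Equiv.Perm (Fin 3) := 1

/-- The pattern 132 (0-indexed: `0 ↦ 0`, `1 ↦ 2`, `2 ↦ 1`). -/
def perm132 : Equiv.Perm (Fin 3) := Equiv.swap 1 2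

/-- The pattern 12 (identity on two letters). -/
def perm12 : Equiv.Perm (Fin 2) := 1

/-- The pattern 21. -/
def perm21 : Equiv.Perm (Fin 2) := Equiv.swap 0 1

/-- The unsigned Stirling numbers of the first kind. -/
def stirlingFirst : ℕ → ℕ → ℕ
  | 0, 0 => 1
  | 0, _ + 1 => 0
  | _ + 1, 0 => 0
  | n + 1, k + 1 => n * stirlingFirst n (k + 1) + stirlingFirst n k
namespace JE14

variable {n : ℕ}

/-- Elementary form of the common part of an occurrence of either mesh pattern. -/
def Core (π : Equiv.Perm (Fin n)) (x p q : Fin n) : Prop :=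
  (x:ℕ) < p ∧ (p:ℕ) < q ∧ (π x : ℕ) < π p ∧ (π x : ℕ) < π q ∧
  (∀ j : Fin n, (j:ℕ) < x → (π p : ℕ) < π j ∧ (π q : ℕ) < π j) ∧
  (∀ j : Fin n, (x:ℕ) < j → (j:ℕ) < q → j ≠ p → (π j : ℕ) < π p ∧ (π j : ℕ) < π q) ∧
  (∀ j : Fin n, (q:ℕ) < j → (π x : ℕ) < π j)

lemma posExt0 (i : Fin 3 → Fin n) : posExt i 0 = 0 := rfl
lemma posExt1 (i : Fin 3 → Fin n) : posExt i 1 = (i 0 : ℕ) + 1 := rfl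
lemma posExt2 (i : Fin 3 → Fin n) : posExt i 2 = (i 1 : ℕ) + 1 := rfl
lemma posExt3 (i : Fin 3 → Fin n) : posExt i 3 = (i 2 : ℕ) + 1 := rfl
lemma posExt4 (i : Fin 3 → Fin n) : posExt i 4 = n + 1 := rfl

lemma valExt123_0 (π : Equiv.Perm (Fin n)) (i : Fin 3 → Fin n) : valExt perm123 π i 0 = 0 := rfl
lemma valExt123_1 (π : Equiv.Perm (Fin n)) (i : Fin 3 → Fin n) :
    valExt perm123 π i 1 = (π (i 0) : ℕ) + 1 := rfl
lemma valExt123_2 (π : Equiv.Perm (Fin n)) (i : Fin 3 → Fin n) :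
    valExt perm123 π i 2 = (π (i 1) : ℕ) + 1 := rfl
lemma valExt123_3 (π : Equiv.Perm (Fin n)) (i : Fin 3 → Fin n) :
    valExt perm123 π i 3 = (π (i 2) : ℕ) + 1 := rfl
lemma valExt123_4 (π : Equiv.Perm (Fin n)) (i : Fin 3 → Fin n) : valExt perm123 π i 4 = n + 1 := rfl

lemma valExt132_0 (π : Equiv.Perm (Fin n)) (i : Fin 3 → Fin n) : valExt perm132 π i 0 = 0 := rfl
lemma valExt132_1 (π : Equiv.Perm (Fin n)) (i : Fin 3 → Fin n) :
    valExt perm132 π i 1 = (π (i 0) : ℕ) + 1 := by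
  have h : ((Equiv.swap 1 2 : Equiv.Perm (Fin 3)) 0) = 0 := by decide
  simp [valExt, perm132, h]
lemma valExt132_2 (π : Equiv.Perm (Fin n)) (i : Fin 3 → Fin n) :
    valExt perm132 π i 2 = (π (i 2) : ℕ) + 1 := by
  have h : ((Equiv.swap 1 2 : Equiv.Perm (Fin 3)) 1) = 2 := by decide
  simp [valExt, perm132, h]
lemma valExt132_3 (π : Equiv.Perm (Fin n)) (i : Fin 3 → Fin n) :
    valExt perm132 π i 3 = (π (i 1) : ℕ) + 1 := by
  have h : ((Equiv.swap 1 2 : Equiv.Perm (Fin 3)) 2) = 1 := by decide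
  simp [valExt, perm132, h]
lemma valExt132_4 (π : Equiv.Perm (Fin n)) (i : Fin 3 → Fin n) : valExt perm132 π i 4 = n + 1 := by
  simp [valExt]

lemma strictMono_fin3 {i : Fin 3 → Fin n} (h01 : i 0 < i 1) (h12 : i 1 < i 2) :
    StrictMono i := by
  intro a b hab
  fin_cases a <;> fin_cases b <;> simp_all <;> first
    | exact h01 | exact h12 | exact lt_trans h01 h12
    | exact absurd hab (by decide)

lemma vne (π : Equiv.Perm (Fin n)) {j k : Fin n} (h : j ≠ k) : (π j : ℕ) ≠ (π k : ℕ) := by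
  simpa [Fin.val_inj] using π.injective.ne h

lemma fin_ne_of_val_lt {j k : Fin n} (h : (j:ℕ) < k) : j ≠ k := by
  intro e; subst e; omega

/-- The shading set. -/
def SS : Set (ℕ × ℕ) := {(0, 0), (0, 1), (0, 2), (1, 2), (1, 3), (2, 2), (2, 3), (3, 0)}

lemma mem_SS {a b : ℕ} : (a, b) ∈ SS ↔
    (a = 0 ∧ b = 0) ∨ (a = 0 ∧ b = 1) ∨ (a = 0 ∧ b = 2) ∨ (a = 1 ∧ b = 2) ∨
    (a = 1 ∧ b = 3) ∨ (a = 2 ∧ b = 2) ∨ (a = 2 ∧ b = 3) ∨ (a = 3 ∧ b = 0) := by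
  simp [SS, Prod.ext_iff]


end JE14
namespace JE14

variable {n : ℕ}

lemma fin3_cases (a : Fin 3) : a = 0 ∨ a = 1 ∨ a = 2 := by fin_cases a <;> simp

lemma isMeshOcc123_iff (π : Equiv.Perm (Fin n)) (i : Fin 3 → Fin n) :
    IsMeshOcc perm123 SS π i ↔
      Core π (i 0) (i 1) (i 2) ∧ (π (i 1) : ℕ) < π (i 2) := by
  constructor
  · rintro ⟨hm, hpat, hmesh⟩
    have h01 : (i 0 : ℕ) < i 1 := hm (by decide : (0 : Fin 3) < 1)
    have h12 : (i 1 : ℕ) < i 2 := hm (by decide : (1 : Fin 3) < 2)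
    have hv01 : (π (i 0) : ℕ) < π (i 1) := (hpat 0 1).2 (by decide)
    have hv12 : (π (i 1) : ℕ) < π (i 2) := (hpat 1 2).2 (by decide)
    have e00 := hmesh 0 0 (by simp [SS])
    have e01 := hmesh 0 1 (by simp [SS])
    have e02 := hmesh 0 2 (by simp [SS])
    have e12 := hmesh 1 2 (by simp [SS])
    have e13 := hmesh 1 3 (by simp [SS])
    have e22 := hmesh 2 2 (by simp [SS])
    have e23 := hmesh 2 3 (by simp [SS])
    have e30 := hmesh 3 0 (by simp [SS])
    simp only [posExt0, posExt1, posExt2, posExt3, posExt4, valExt123_0, valExt123_1,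
      valExt123_2, valExt123_3, valExt123_4, zero_add, Nat.reduceAdd] at e00 e01 e02 e12 e13 e22 e23 e30
    refine ⟨⟨h01, h12, hv01, by omega, ?_, ?_, ?_⟩, hv12⟩
    · intro j hj
      have n0 : ¬ ((π j : ℕ) < π (i 0)) := fun h => e00 ⟨j, by omega⟩
      have n1 : ¬ ((π (i 0) : ℕ) < π j ∧ (π j : ℕ) < π (i 1)) := fun h => e01 ⟨j, by omega⟩
      have n2 : ¬ ((π (i 1) : ℕ) < π j ∧ (π j : ℕ) < π (i 2)) := fun h => e02 ⟨j, by omega⟩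
      have d0 : (π j : ℕ) ≠ π (i 0) := vne π (fin_ne_of_val_lt hj)
      have d1 : (π j : ℕ) ≠ π (i 1) := vne π (fin_ne_of_val_lt (by omega))
      have d2 : (π j : ℕ) ≠ π (i 2) := vne π (fin_ne_of_val_lt (by omega))
      omega
    · intro j hx hq hne
      have hne' : (j : ℕ) ≠ i 1 := fun h => hne (Fin.ext h)
      have hlt := (π j).isLt
      have d1 : (π j : ℕ) ≠ π (i 1) := vne π hne
      have d2 : (π j : ℕ) ≠ π (i 2) := vne π (fin_ne_of_val_lt hq)
      rcases lt_or_gt_of_ne hne' with h | h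
      · have n1 : ¬ ((π (i 1) : ℕ) < π j ∧ (π j : ℕ) < π (i 2)) := fun hh => e12 ⟨j, by omega⟩
        have n2 : ¬ ((π (i 2) : ℕ) < π j) := fun hh => e13 ⟨j, by omega⟩
        omega
      · have n1 : ¬ ((π (i 1) : ℕ) < π j ∧ (π j : ℕ) < π (i 2)) := fun hh => e22 ⟨j, by omega⟩
        have n2 : ¬ ((π (i 2) : ℕ) < π j) := fun hh => e23 ⟨j, by omega⟩
        omega
    · intro j hq
      have hj := j.isLt
      have n0 : ¬ ((π j : ℕ) < π (i 0)) := fun h => e30 ⟨j, by omega⟩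
      have d0 : j ≠ i 0 := fun h => by rw [h] at hq; omega
      have d0' : (π j : ℕ) ≠ π (i 0) := vne π d0
      omega
  · rintro ⟨⟨c1, c2, c3, c4, pre, mid, post⟩, hty⟩
    refine ⟨strictMono_fin3 (Fin.lt_def.mpr c1) (Fin.lt_def.mpr c2), ?_, ?_⟩
    · intro a b
      have hp : ∀ c : Fin 3, perm123 c = c := fun c => rfl
      rw [hp, hp]
      rcases fin3_cases a with rfl | rfl | rfl <;> rcases fin3_cases b with rfl | rfl | rfl
      · exact iff_of_false (by rw [Fin.lt_def]; omega) (by decide)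
      · exact iff_of_true (Fin.lt_def.mpr c3) (by decide)
      · exact iff_of_true (Fin.lt_def.mpr c4) (by decide)
      · exact iff_of_false (by rw [Fin.lt_def]; omega) (by decide)
      · exact iff_of_false (by rw [Fin.lt_def]; omega) (by decide)
      · exact iff_of_true (Fin.lt_def.mpr hty) (by decide)
      · exact iff_of_false (by rw [Fin.lt_def]; omega) (by decide)
      · exact iff_of_false (by rw [Fin.lt_def]; omega) (by decide)
      · exact iff_of_false (by rw [Fin.lt_def]; omega) (by decide)
    · intro a b hab
      rw [mem_SS] at hab
      rcases hab with ⟨ha, hb⟩ | ⟨ha, hb⟩ | ⟨ha, hb⟩ | ⟨ha, hb⟩ | ⟨ha, hb⟩ | ⟨ha, hb⟩ |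
        ⟨ha, hb⟩ | ⟨ha, hb⟩ <;> subst ha <;> subst hb <;>
        rintro ⟨j, h1, h2, h3, h4⟩ <;>
        simp only [posExt0, posExt1, posExt2, posExt3, posExt4, valExt123_0, valExt123_1,
          valExt123_2, valExt123_3, valExt123_4, zero_add, Nat.reduceAdd] at h1 h2 h3 h4
      · exact absurd h4 (by have := pre j (by omega); omega)
      · exact absurd h4 (by have := pre j (by omega); omega)
      · exact absurd h4 (by have := pre j (by omega); omega)
      · have := mid j (by omega) (by omega) (fin_ne_of_val_lt (by omega)); omega
      · have := mid j (by omega) (by omega) (fin_ne_of_val_lt (by omega)); omega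
      · have := mid j (by omega) (by omega) (fun h => by rw [h] at h1; omega); omega
      · have := mid j (by omega) (by omega) (fun h => by rw [h] at h1; omega); omega
      · have := post j (by omega); omega
lemma isMeshOcc132_iff (π : Equiv.Perm (Fin n)) (i : Fin 3 → Fin n) :
    IsMeshOcc perm132 SS π i ↔
      Core π (i 0) (i 1) (i 2) ∧ (π (i 2) : ℕ) < π (i 1) := by
  constructor
  · rintro ⟨hm, hpat, hmesh⟩
    have h01 : (i 0 : ℕ) < i 1 := hm (by decide : (0 : Fin 3) < 1)
    have h12 : (i 1 : ℕ) < i 2 := hm (by decide : (1 : Fin 3) < 2)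
    have hv01 : (π (i 0) : ℕ) < π (i 1) := (hpat 0 1).2 (by decide)
    have hv02 : (π (i 0) : ℕ) < π (i 2) := (hpat 0 2).2 (by decide)
    have hv21 : (π (i 2) : ℕ) < π (i 1) := (hpat 2 1).2 (by decide)
    have e00 := hmesh 0 0 (by simp [SS])
    have e01 := hmesh 0 1 (by simp [SS])
    have e02 := hmesh 0 2 (by simp [SS])
    have e12 := hmesh 1 2 (by simp [SS])
    have e13 := hmesh 1 3 (by simp [SS])
    have e22 := hmesh 2 2 (by simp [SS])
    have e23 := hmesh 2 3 (by simp [SS])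
    have e30 := hmesh 3 0 (by simp [SS])
    simp only [posExt0, posExt1, posExt2, posExt3, posExt4, valExt132_0, valExt132_1,
      valExt132_2, valExt132_3, valExt132_4, zero_add, Nat.reduceAdd] at e00 e01 e02 e12 e13 e22 e23 e30
    refine ⟨⟨h01, h12, hv01, hv02, ?_, ?_, ?_⟩, hv21⟩
    · intro j hj
      have n0 : ¬ ((π j : ℕ) < π (i 0)) := fun h => e00 ⟨j, by omega⟩
      have n1 : ¬ ((π (i 0) : ℕ) < π j ∧ (π j : ℕ) < π (i 2)) := fun h => e01 ⟨j, by omega⟩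
      have n2 : ¬ ((π (i 2) : ℕ) < π j ∧ (π j : ℕ) < π (i 1)) := fun h => e02 ⟨j, by omega⟩
      have d0 : (π j : ℕ) ≠ π (i 0) := vne π (fin_ne_of_val_lt hj)
      have d1 : (π j : ℕ) ≠ π (i 1) := vne π (fin_ne_of_val_lt (by omega))
      have d2 : (π j : ℕ) ≠ π (i 2) := vne π (fin_ne_of_val_lt (by omega))
      omega
    · intro j hx hq hne
      have hne' : (j : ℕ) ≠ i 1 := fun h => hne (Fin.ext h)
      have hlt := (π j).isLt
      have d1 : (π j : ℕ) ≠ π (i 1) := vne π hne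
      have d2 : (π j : ℕ) ≠ π (i 2) := vne π (fin_ne_of_val_lt hq)
      rcases lt_or_gt_of_ne hne' with h | h
      · have n1 : ¬ ((π (i 2) : ℕ) < π j ∧ (π j : ℕ) < π (i 1)) := fun hh => e12 ⟨j, by omega⟩
        have n2 : ¬ ((π (i 1) : ℕ) < π j) := fun hh => e13 ⟨j, by omega⟩
        omega
      · have n1 : ¬ ((π (i 2) : ℕ) < π j ∧ (π j : ℕ) < π (i 1)) := fun hh => e22 ⟨j, by omega⟩
        have n2 : ¬ ((π (i 1) : ℕ) < π j) := fun hh => e23 ⟨j, by omega⟩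
        omega
    · intro j hq
      have hj := j.isLt
      have n0 : ¬ ((π j : ℕ) < π (i 0)) := fun h => e30 ⟨j, by omega⟩
      have d0 : j ≠ i 0 := fun h => by rw [h] at hq; omega
      have d0' : (π j : ℕ) ≠ π (i 0) := vne π d0
      omega
  · rintro ⟨⟨c1, c2, c3, c4, pre, mid, post⟩, hty⟩
    refine ⟨strictMono_fin3 (Fin.lt_def.mpr c1) (Fin.lt_def.mpr c2), ?_, ?_⟩
    · intro a b
      rcases fin3_cases a with rfl | rfl | rfl <;> rcases fin3_cases b with rfl | rfl | rfl
      · exact iff_of_false (by rw [Fin.lt_def]; omega) (by decide)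
      · exact iff_of_true (Fin.lt_def.mpr c3) (by decide)
      · exact iff_of_true (Fin.lt_def.mpr c4) (by decide)
      · exact iff_of_false (by rw [Fin.lt_def]; omega) (by decide)
      · exact iff_of_false (by rw [Fin.lt_def]; omega) (by decide)
      · exact iff_of_false (by rw [Fin.lt_def]; omega) (by decide)
      · exact iff_of_false (by rw [Fin.lt_def]; omega) (by decide)
      · exact iff_of_true (Fin.lt_def.mpr hty) (by decide)
      · exact iff_of_false (by rw [Fin.lt_def]; omega) (by decide)
    · intro a b hab
      rw [mem_SS] at hab
      rcases hab with ⟨ha, hb⟩ | ⟨ha, hb⟩ | ⟨ha, hb⟩ | ⟨ha, hb⟩ | ⟨ha, hb⟩ | ⟨ha, hb⟩ |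
        ⟨ha, hb⟩ | ⟨ha, hb⟩ <;> subst ha <;> subst hb <;>
        rintro ⟨j, h1, h2, h3, h4⟩ <;>
        simp only [posExt0, posExt1, posExt2, posExt3, posExt4, valExt132_0, valExt132_1,
          valExt132_2, valExt132_3, valExt132_4, zero_add, Nat.reduceAdd] at h1 h2 h3 h4
      · exact absurd h4 (by have := pre j (by omega); omega)
      · exact absurd h4 (by have := pre j (by omega); omega)
      · exact absurd h4 (by have := pre j (by omega); omega)
      · have := mid j (by omega) (by omega) (fin_ne_of_val_lt (by omega)); omega
      · have := mid j (by omega) (by omega) (fin_ne_of_val_lt (by omega)); omega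
      · have := mid j (by omega) (by omega) (fun h => by rw [h] at h1; omega); omega
      · have := mid j (by omega) (by omega) (fun h => by rw [h] at h1; omega); omega
      · have := post j (by omega); omega
lemma fin_ne_of_val_ne {j k : Fin n} (h : (j:ℕ) ≠ k) : j ≠ k := fun e => h (by rw [e])

lemma core_unique {π : Equiv.Perm (Fin n)} {x p x' p' q : Fin n}
    (h : Core π x p q) (h' : Core π x' p' q) : x = x' ∧ p = p' := by
  obtain ⟨c1, c2, c3, c4, pre, mid, post⟩ := h
  obtain ⟨d1, d2, d3, d4, pre', mid', post'⟩ := h'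
  have hx : x = x' := by
    rcases Nat.lt_trichotomy (x:ℕ) (x':ℕ) with hlt | he | hgt
    · have := pre' x hlt; omega
    · exact Fin.ext he
    · have := pre x' hgt; omega
  subst hx
  refine ⟨rfl, ?_⟩
  by_contra hne
  have h1 := mid p' (by omega) (by omega) (fun e => hne (by rw [e]))
  have h2 := mid' p (by omega) (by omega) hne
  omega

section swap
variable {π : Equiv.Perm (Fin n)} {p q : Fin n}

lemma swap_p (hpq : p ≠ q) : ((π * Equiv.swap p q) p : ℕ) = π q := by
  simp [Equiv.Perm.mul_apply]

lemma swap_q (hpq : p ≠ q) : ((π * Equiv.swap p q) q : ℕ) = π p := by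
  simp [Equiv.Perm.mul_apply]

lemma swap_other {j : Fin n} (hjp : j ≠ p) (hjq : j ≠ q) :
    ((π * Equiv.swap p q) j : ℕ) = π j := by
  simp [Equiv.Perm.mul_apply, Equiv.swap_apply_of_ne_of_ne hjp hjq]

lemma core_swap {x : Fin n} (h : Core π x p q) : Core (π * Equiv.swap p q) x p q := by
  obtain ⟨c1, c2, c3, c4, pre, mid, post⟩ := h
  have hpq : p ≠ q := fin_ne_of_val_ne (by omega)
  have hx : x ≠ p := fin_ne_of_val_ne (by omega)
  have hxq : x ≠ q := fin_ne_of_val_ne (by omega)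
  refine ⟨c1, c2, ?_, ?_, ?_, ?_, ?_⟩
  · rw [swap_other hx hxq, swap_p hpq]; omega
  · rw [swap_other hx hxq, swap_q hpq]; omega
  · intro j hj
    have hjp : j ≠ p := fin_ne_of_val_ne (by omega)
    have hjq : j ≠ q := fin_ne_of_val_ne (by omega)
    have := pre j hj
    rw [swap_other hjp hjq, swap_p hpq, swap_q hpq]; omega
  · intro j h1 h2 hjp
    have hjq : j ≠ q := fin_ne_of_val_ne (by omega)
    have := mid j h1 h2 hjp
    rw [swap_other hjp hjq, swap_p hpq, swap_q hpq]; omega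
  · intro j hj
    have hjp : j ≠ p := fin_ne_of_val_ne (by omega)
    have hjq : j ≠ q := fin_ne_of_val_ne (by omega)
    have := post j hj
    rw [swap_other hx hxq, swap_other hjp hjq]; omega

end swap
lemma core_transfer {π : Equiv.Perm (Fin n)} {x p q x' p' q' : Fin n}
    (h : Core π x p q) (h' : Core π x' p' q') (hqq : q' ≠ q) :
    ∃ x'' p'', Core (π * Equiv.swap p q) x'' p'' q' ∧
      (((π * Equiv.swap p q) p'' : ℕ) < (π * Equiv.swap p q) q' ↔ (π p' : ℕ) < π q') := by
  obtain ⟨c1, c2, c3, c4, pre, mid, post⟩ := h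
  obtain ⟨d1, d2, d3, d4, pre', mid', post'⟩ := h'
  have hpq : p ≠ q := fin_ne_of_val_ne (by omega)
  have hqqv : (q' : ℕ) ≠ q := fun e => hqq (Fin.ext e)
  rcases Nat.lt_trichotomy (x : ℕ) (x' : ℕ) with hxx | hxx | hxx
  · -- x < x'
    have k := pre' x hxx
    have q'q : (q' : ℕ) < q := by
      rcases Nat.lt_trichotomy (q' : ℕ) (q : ℕ) with h1 | h1 | h1
      · exact h1
      · omega
      · have := post q' h1; omega
    have px' : x' ≠ p := by
      intro e; rw [e] at d3; omega
    have mx' := mid x' (by omega) (by omega) px'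
    have hpos : (p : ℕ) < x' ∨ (q' : ℕ) < p := by
      by_contra hc
      push_neg at hc
      have hp1 : (x' : ℕ) < p := by
        have hne : (x' : ℕ) ≠ p := fun e => px' (Fin.ext e)
        omega
      have hp2 : (p : ℕ) < q' := by
        have hne : (p : ℕ) ≠ q' := fun e => by
          have e' : p = q' := Fin.ext e
          rw [← e'] at k
          omega
        omega
      have hpp' : p ≠ p' := by intro e; rw [← e] at k; omega
      have h5 := mid' p hp1 hp2 hpp'
      have hp'p : (p' : ℕ) < p ∨ (p : ℕ) < p' := by
        rcases Nat.lt_trichotomy (p' : ℕ) (p : ℕ) with h1 | h1 | h1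
        · exact Or.inl h1
        · exact absurd (Fin.ext h1) (fun e => hpp' e.symm)
        · exact Or.inr h1
      have h6 := mid p' (by omega) (by omega) (fun e => hpp' e.symm)
      omega
    have np'p : p' ≠ p := by intro e; rw [← e] at c3; omega
    have np'q : p' ≠ q := by intro e; rw [← e] at c4; omega
    have nq'p : q' ≠ p := by intro e; rw [← e] at c3; omega
    have nq'q : q' ≠ q := hqq
    have nx'q : x' ≠ q := fin_ne_of_val_ne (by omega)
    refine ⟨x', p', ⟨d1, d2, ?_, ?_, ?_, ?_, ?_⟩, ?_⟩
    · rw [swap_other px' nx'q, swap_other np'p np'q]; omega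
    · rw [swap_other px' nx'q, swap_other nq'p nq'q]; omega
    · intro j hj
      rw [swap_other np'p np'q, swap_other nq'p nq'q]
      rcases eq_or_ne j p with rfl | hjp
      · rw [swap_p hpq]; omega
      · rcases eq_or_ne j q with rfl | hjq
        · omega
        · rw [swap_other hjp hjq]; have := pre' j hj; omega
    · intro j h1 h2 hjp'
      have hjp : j ≠ p := fin_ne_of_val_ne (by omega)
      have hjq : j ≠ q := fin_ne_of_val_ne (by omega)
      rw [swap_other hjp hjq, swap_other np'p np'q, swap_other nq'p nq'q]
      exact mid' j h1 h2 hjp'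
    · intro j hj
      rw [swap_other px' nx'q]
      rcases eq_or_ne j p with rfl | hjp
      · rw [swap_p hpq]; omega
      · rcases eq_or_ne j q with rfl | hjq
        · rw [swap_q hpq]; omega
        · rw [swap_other hjp hjq]; have := post' j hj; omega
    · rw [swap_other np'p np'q, swap_other nq'p nq'q]
  · -- x = x'
    have hx : x = x' := Fin.ext hxx
    subst hx
    rcases Nat.lt_trichotomy (q' : ℕ) (q : ℕ) with hq'q | hq'q | hq'q
    · -- q' < q
      rcases eq_or_ne p' p with rfl | hp'p
      · -- C1a : p' = p
        have mq' := mid q' (by omega) hq'q (fin_ne_of_val_ne (by omega))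
        have nq'p : q' ≠ p' := fin_ne_of_val_ne (by omega)
        have nxp : x ≠ p' := fin_ne_of_val_ne (by omega)
        have nxq : x ≠ q := fin_ne_of_val_ne (by omega)
        refine ⟨x, p', ⟨c1, d2, ?_, ?_, ?_, ?_, ?_⟩, ?_⟩
        · rw [swap_other nxp nxq, swap_p hpq]; omega
        · rw [swap_other nxp nxq, swap_other nq'p hqq]; omega
        · intro j hj
          have hjp : j ≠ p' := fin_ne_of_val_ne (by omega)
          have hjq : j ≠ q := fin_ne_of_val_ne (by omega)
          rw [swap_other hjp hjq, swap_p hpq, swap_other nq'p hqq]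
          have := pre j hj; have := pre' j hj; omega
        · intro j h1 h2 hjp
          have hjq : j ≠ q := fin_ne_of_val_ne (by omega)
          rw [swap_other hjp hjq, swap_p hpq, swap_other nq'p hqq]
          have := mid j h1 (by omega) hjp; have := mid' j h1 h2 hjp; omega
        · intro j hj
          rw [swap_other nxp nxq]
          rcases eq_or_ne j p' with rfl | hjp
          · omega
          · rcases eq_or_ne j q with rfl | hjq
            · rw [swap_q hpq]; omega
            · rw [swap_other hjp hjq]; have := post' j hj; omega
        · rw [swap_p hpq, swap_other nq'p hqq]
          exact iff_of_false (by omega) (by omega)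
      · rcases eq_or_ne q' p with rfl | hq'p
        · -- C1b : q' = p
          have mp' := mid p' (by omega) (by omega) hp'p
          have np'q : p' ≠ q := fin_ne_of_val_ne (by omega)
          have nxp : x ≠ q' := fin_ne_of_val_ne (by omega)
          have nxq : x ≠ q := fin_ne_of_val_ne (by omega)
          refine ⟨x, p', ⟨d1, d2, ?_, ?_, ?_, ?_, ?_⟩, ?_⟩
          · rw [swap_other nxp nxq, swap_other hp'p np'q]; omega
          · rw [swap_other nxp nxq, swap_p hpq]; omega
          · intro j hj
            have hjp : j ≠ q' := fin_ne_of_val_ne (by omega)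
            have hjq : j ≠ q := fin_ne_of_val_ne (by omega)
            rw [swap_other hjp hjq, swap_other hp'p np'q, swap_p hpq]
            have := pre j hj; have := pre' j hj; omega
          · intro j h1 h2 hjp'
            have hjp : j ≠ q' := fin_ne_of_val_ne (by omega)
            have hjq : j ≠ q := fin_ne_of_val_ne (by omega)
            rw [swap_other hjp hjq, swap_other hp'p np'q, swap_p hpq]
            have := mid j h1 (by omega) hjp; have := mid' j h1 h2 hjp'; omega
          · intro j hj
            rw [swap_other nxp nxq]
            rcases eq_or_ne j q' with rfl | hjp
            · omega
            · rcases eq_or_ne j q with rfl | hjq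
              · rw [swap_q hpq]; omega
              · rw [swap_other hjp hjq]; have := post' j hj; omega
          · rw [swap_other hp'p np'q, swap_p hpq]
            exact iff_of_true (by omega) (by omega)
        · -- C1c : p' ≠ p, q' ≠ p
          have pq' : (q' : ℕ) < p := by
            by_contra hc
            push_neg at hc
            have hp2 : (p : ℕ) < q' := by
              rcases Nat.lt_trichotomy (p : ℕ) (q' : ℕ) with h1 | h1 | h1
              · exact h1
              · exact absurd (Fin.ext h1).symm hq'p
              · omega
            have hpx : (x : ℕ) < p := c1
            have h5 := mid' p hpx hp2 (fun e => hp'p (e.symm))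
            have h6 := mid p' d1 (by omega) hp'p
            omega
          have np'q : p' ≠ q := fin_ne_of_val_ne (by omega)
          have nq'q : q' ≠ q := hqq
          have np'p : p' ≠ p := fin_ne_of_val_ne (by omega)
          have nq'p : q' ≠ p := hq'p
          have nxp : x ≠ p := fin_ne_of_val_ne (by omega)
          have nxq : x ≠ q := fin_ne_of_val_ne (by omega)
          refine ⟨x, p', ⟨d1, d2, ?_, ?_, ?_, ?_, ?_⟩, ?_⟩
          · rw [swap_other nxp nxq, swap_other np'p np'q]; omega
          · rw [swap_other nxp nxq, swap_other nq'p nq'q]; omega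
          · intro j hj
            have hjp : j ≠ p := fin_ne_of_val_ne (by omega)
            have hjq : j ≠ q := fin_ne_of_val_ne (by omega)
            rw [swap_other hjp hjq, swap_other np'p np'q, swap_other nq'p nq'q]
            exact pre' j hj
          · intro j h1 h2 hjp'
            have hjp : j ≠ p := fin_ne_of_val_ne (by omega)
            have hjq : j ≠ q := fin_ne_of_val_ne (by omega)
            rw [swap_other hjp hjq, swap_other np'p np'q, swap_other nq'p nq'q]
            exact mid' j h1 h2 hjp'
          · intro j hj
            rw [swap_other nxp nxq]
            rcases eq_or_ne j p with rfl | hjp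
            · rw [swap_p hpq]; omega
            · rcases eq_or_ne j q with rfl | hjq
              · rw [swap_q hpq]; omega
              · rw [swap_other hjp hjq]; have := post' j hj; omega
          · rw [swap_other np'p np'q, swap_other nq'p nq'q]
    · exact absurd (Fin.ext hq'q) hqq
    · -- q' > q
      rcases eq_or_ne p' q with rfl | hp'q
      · -- C2a : p' = q
        have mp := mid' p (by omega) (by omega) (fin_ne_of_val_ne (by omega))
        have nxp : x ≠ p := fin_ne_of_val_ne (by omega)
        have nxq : x ≠ p' := fin_ne_of_val_ne (by omega)
        have nq'p : q' ≠ p := fin_ne_of_val_ne (by omega)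
        refine ⟨x, p, ⟨c1, by omega, ?_, ?_, ?_, ?_, ?_⟩, ?_⟩
        · rw [swap_other nxp nxq, swap_p hpq]; omega
        · rw [swap_other nxp nxq, swap_other nq'p hqq]; omega
        · intro j hj
          have hjp : j ≠ p := fin_ne_of_val_ne (by omega)
          have hjq : j ≠ p' := fin_ne_of_val_ne (by omega)
          rw [swap_other hjp hjq, swap_p hpq, swap_other nq'p hqq]
          have := pre j hj; have := pre' j hj; omega
        · intro j h1 h2 hjp
          rw [swap_other nq'p hqq, swap_p hpq]
          rcases eq_or_ne j p' with rfl | hjq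
          · rw [swap_q hpq]; omega
          · rw [swap_other hjp hjq]
            have := mid' j h1 h2 hjq; omega
        · intro j hj
          have hjp : j ≠ p := fin_ne_of_val_ne (by omega)
          have hjq : j ≠ p' := fin_ne_of_val_ne (by omega)
          rw [swap_other nxp nxq, swap_other hjp hjq]
          exact post' j hj
        · rw [swap_p hpq, swap_other nq'p hqq]
      · rcases eq_or_ne p' p with rfl | hp'p
        · -- C2b : p' = p
          have mq := mid' q (by omega) (by omega) (fun e => hpq e.symm)
          have nxp : x ≠ p' := fin_ne_of_val_ne (by omega)
          have nxq : x ≠ q := fin_ne_of_val_ne (by omega)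
          have nq'p : q' ≠ p' := fin_ne_of_val_ne (by omega)
          refine ⟨x, q, ⟨by omega, by omega, ?_, ?_, ?_, ?_, ?_⟩, ?_⟩
          · rw [swap_other nxp nxq, swap_q hpq]; omega
          · rw [swap_other nxp nxq, swap_other nq'p hqq]; omega
          · intro j hj
            have hjp : j ≠ p' := fin_ne_of_val_ne (by omega)
            have hjq : j ≠ q := fin_ne_of_val_ne (by omega)
            rw [swap_other hjp hjq, swap_q hpq, swap_other nq'p hqq]
            have := pre j hj; have := pre' j hj; omega
          · intro j h1 h2 hjq
            rw [swap_other nq'p hqq, swap_q hpq]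
            rcases eq_or_ne j p' with rfl | hjp
            · rw [swap_p hpq]; omega
            · rw [swap_other hjp hjq]
              have := mid' j h1 h2 hjp; omega
          · intro j hj
            have hjp : j ≠ p' := fin_ne_of_val_ne (by omega)
            have hjq : j ≠ q := fin_ne_of_val_ne (by omega)
            rw [swap_other nxp nxq, swap_other hjp hjq]
            exact post' j hj
          · rw [swap_q hpq, swap_other nq'p hqq]
        · -- C2c : p' ∉ {p, q}
          have qp' : (q : ℕ) < p' := by
            by_contra hc
            push_neg at hc
            have hp1 : (p' : ℕ) < q := by
              rcases Nat.lt_trichotomy (p' : ℕ) (q : ℕ) with h1 | h1 | h1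
              · exact h1
              · exact absurd (Fin.ext h1) hp'q
              · omega
            have h5 := mid p' d1 hp1 hp'p
            have h6 := mid' p c1 (by omega) (fun e => hp'p e.symm)
            omega
          have nxp : x ≠ p := fin_ne_of_val_ne (by omega)
          have nxq : x ≠ q := fin_ne_of_val_ne (by omega)
          have np'p : p' ≠ p := hp'p
          have np'q : p' ≠ q := hp'q
          have nq'p : q' ≠ p := fin_ne_of_val_ne (by omega)
          have mp := mid' p c1 (by omega) (fun e => hp'p e.symm)
          have mq := mid' q (by omega) (by omega) (fun e => hp'q e.symm)
          refine ⟨x, p', ⟨d1, d2, ?_, ?_, ?_, ?_, ?_⟩, ?_⟩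
          · rw [swap_other nxp nxq, swap_other np'p np'q]; omega
          · rw [swap_other nxp nxq, swap_other nq'p hqq]; omega
          · intro j hj
            have hjp : j ≠ p := fin_ne_of_val_ne (by omega)
            have hjq : j ≠ q := fin_ne_of_val_ne (by omega)
            rw [swap_other hjp hjq, swap_other np'p np'q, swap_other nq'p hqq]
            exact pre' j hj
          · intro j h1 h2 hjp'
            rw [swap_other np'p np'q, swap_other nq'p hqq]
            rcases eq_or_ne j p with rfl | hjp
            · rw [swap_p hpq]; omega
            · rcases eq_or_ne j q with rfl | hjq
              · rw [swap_q hpq]; omega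
              · rw [swap_other hjp hjq]
                have := mid' j h1 h2 hjp'; omega
          · intro j hj
            have hjp : j ≠ p := fin_ne_of_val_ne (by omega)
            have hjq : j ≠ q := fin_ne_of_val_ne (by omega)
            rw [swap_other nxp nxq, swap_other hjp hjq]
            exact post' j hj
          · rw [swap_other np'p np'q, swap_other nq'p hqq]
  · -- x > x'
    have k := pre x' hxx
    have qq' : (q : ℕ) < q' := by
      rcases Nat.lt_trichotomy (q : ℕ) (q' : ℕ) with h1 | h1 | h1
      · exact h1
      · omega
      · have := post' q h1; omega
    have nxp' : x ≠ p' := by intro e; rw [← e] at d3; omega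
    have mp := mid' p (by omega) (by omega) (by intro e; rw [← e] at d3; omega)
    have mq := mid' q (by omega) (by omega) (by intro e; rw [← e] at d3; omega)
    have nx'p : x' ≠ p := fin_ne_of_val_ne (by omega)
    have nx'q : x' ≠ q := fin_ne_of_val_ne (by omega)
    have np'p : p' ≠ p := by intro e; rw [e] at d3; omega
    have np'q : p' ≠ q := by intro e; rw [e] at d3; omega
    have nq'p : q' ≠ p := fin_ne_of_val_ne (by omega)
    refine ⟨x', p', ⟨d1, d2, ?_, ?_, ?_, ?_, ?_⟩, ?_⟩
    · rw [swap_other nx'p nx'q, swap_other np'p np'q]; omega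
    · rw [swap_other nx'p nx'q, swap_other nq'p hqq]; omega
    · intro j hj
      have hjp : j ≠ p := fin_ne_of_val_ne (by omega)
      have hjq : j ≠ q := fin_ne_of_val_ne (by omega)
      rw [swap_other hjp hjq, swap_other np'p np'q, swap_other nq'p hqq]
      exact pre' j hj
    · intro j h1 h2 hjp'
      rw [swap_other np'p np'q, swap_other nq'p hqq]
      rcases eq_or_ne j p with rfl | hjp
      · rw [swap_p hpq]; omega
      · rcases eq_or_ne j q with rfl | hjq
        · rw [swap_q hpq]; omega
        · rw [swap_other hjp hjq]; have := mid' j h1 h2 hjp'; omega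
    · intro j hj
      have hjp : j ≠ p := fin_ne_of_val_ne (by omega)
      have hjq : j ≠ q := fin_ne_of_val_ne (by omega)
      rw [swap_other nx'p nx'q, swap_other hjp hjq]
      exact post' j hj
    · rw [swap_other np'p np'q, swap_other nq'p hqq]
/-- There is an occurrence of pattern 123 (with shading) ending at `q`. -/
def P1 (π : Equiv.Perm (Fin n)) (q : Fin n) : Prop :=
  ∃ x p, Core π x p q ∧ (π p : ℕ) < π q

/-- There is an occurrence of pattern 132 (with shading) ending at `q`. -/
def P2 (π : Equiv.Perm (Fin n)) (q : Fin n) : Prop :=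
  ∃ x p, Core π x p q ∧ (π q : ℕ) < π p

lemma occ123_eq (π : Equiv.Perm (Fin n)) :
    occ perm123 SS π = Nat.card {q : Fin n // P1 π q} := by
  apply Nat.card_congr
  have hf : ∀ s : {i : Fin 3 → Fin n // IsMeshOcc perm123 SS π i}, P1 π (s.1 2) := by
    intro s
    obtain ⟨hc, ht⟩ := (isMeshOcc123_iff π s.1).1 s.2
    exact ⟨s.1 0, s.1 1, hc, ht⟩
  refine Equiv.ofBijective (fun s => ⟨s.1 2, hf s⟩) ⟨?_, ?_⟩
  · rintro ⟨i, hi⟩ ⟨i', hi'⟩ he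
    have e2 : i 2 = i' 2 := by simpa using he
    obtain ⟨hc, _⟩ := (isMeshOcc123_iff π i).1 hi
    obtain ⟨hc', _⟩ := (isMeshOcc123_iff π i').1 hi'
    rw [e2] at hc
    obtain ⟨e0, e1⟩ := core_unique hc hc'
    refine Subtype.ext (funext fun a => ?_)
    rcases fin3_cases a with rfl | rfl | rfl
    exacts [e0, e1, e2]
  · rintro ⟨q, x, p, hc, ht⟩
    refine ⟨⟨![x, p, q], ?_⟩, ?_⟩
    · exact (isMeshOcc123_iff π ![x, p, q]).2 ⟨hc, ht⟩
    · exact Subtype.ext rfl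

lemma occ132_eq (π : Equiv.Perm (Fin n)) :
    occ perm132 SS π = Nat.card {q : Fin n // P2 π q} := by
  apply Nat.card_congr
  have hf : ∀ s : {i : Fin 3 → Fin n // IsMeshOcc perm132 SS π i}, P2 π (s.1 2) := by
    intro s
    obtain ⟨hc, ht⟩ := (isMeshOcc132_iff π s.1).1 s.2
    exact ⟨s.1 0, s.1 1, hc, ht⟩
  refine Equiv.ofBijective (fun s => ⟨s.1 2, hf s⟩) ⟨?_, ?_⟩
  · rintro ⟨i, hi⟩ ⟨i', hi'⟩ he
    have e2 : i 2 = i' 2 := by simpa using he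
    obtain ⟨hc, _⟩ := (isMeshOcc132_iff π i).1 hi
    obtain ⟨hc', _⟩ := (isMeshOcc132_iff π i').1 hi'
    rw [e2] at hc
    obtain ⟨e0, e1⟩ := core_unique hc hc'
    refine Subtype.ext (funext fun a => ?_)
    rcases fin3_cases a with rfl | rfl | rfl
    exacts [e0, e1, e2]
  · rintro ⟨q, x, p, hc, ht⟩
    refine ⟨⟨![x, p, q], ?_⟩, ?_⟩
    · exact (isMeshOcc132_iff π ![x, p, q]).2 ⟨hc, ht⟩
    · exact Subtype.ext rfl

open Classical in
/-- Toggle the (unique) occurrence ending at `q`, if any. -/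
noncomputable def tog (q : Fin n) (π : Equiv.Perm (Fin n)) : Equiv.Perm (Fin n) :=
  if h : ∃ x p, Core π x p q then π * Equiv.swap h.choose_spec.choose q else π

lemma tog_pos {q : Fin n} {π : Equiv.Perm (Fin n)} (h : ∃ x p, Core π x p q) :
    tog q π = π * Equiv.swap h.choose_spec.choose q := by
  rw [tog, dif_pos h]

lemma tog_neg {q : Fin n} {π : Equiv.Perm (Fin n)} (h : ¬ ∃ x p, Core π x p q) :
    tog q π = π := by
  rw [tog, dif_neg h]

lemma tog_invol (q : Fin n) : Function.Involutive (tog (n := n) q) := by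
  intro π
  by_cases h : ∃ x p, Core π x p q
  · have hcore : Core π h.choose h.choose_spec.choose q := h.choose_spec.choose_spec
    set p := h.choose_spec.choose with hp
    rw [tog_pos h]
    have hcore' : Core (π * Equiv.swap p q) h.choose p q := core_swap hcore
    have h' : ∃ x' p', Core (π * Equiv.swap p q) x' p' q := ⟨h.choose, p, hcore'⟩
    rw [tog_pos h']
    have := core_unique h'.choose_spec.choose_spec hcore'
    rw [this.2, mul_assoc, Equiv.swap_mul_self, mul_one]
  · rw [tog_neg h, tog_neg h]

lemma tog_P1_of (q q' : Fin n) (hne : q' ≠ q) (π : Equiv.Perm (Fin n)) :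
    P1 π q' → P1 (tog q π) q' := by
  rintro ⟨x', p', hc', ht'⟩
  by_cases h : ∃ x p, Core π x p q
  · have hcore : Core π h.choose h.choose_spec.choose q := h.choose_spec.choose_spec
    rw [tog_pos h]
    obtain ⟨x'', p'', hc'', hiff⟩ := core_transfer hcore hc' hne
    exact ⟨x'', p'', hc'', hiff.2 ht'⟩
  · rw [tog_neg h]; exact ⟨x', p', hc', ht'⟩

lemma tog_P2_of (q q' : Fin n) (hne : q' ≠ q) (π : Equiv.Perm (Fin n)) :
    P2 π q' → P2 (tog q π) q' := by
  rintro ⟨x', p', hc', ht'⟩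
  by_cases h : ∃ x p, Core π x p q
  · have hcore : Core π h.choose h.choose_spec.choose q := h.choose_spec.choose_spec
    rw [tog_pos h]
    obtain ⟨x'', p'', hc'', hiff⟩ := core_transfer hcore hc' hne
    refine ⟨x'', p'', hc'', ?_⟩
    have hvne : ((π * Equiv.swap h.choose_spec.choose q) p'' : ℕ) ≠
        (π * Equiv.swap h.choose_spec.choose q) q' := by
      have : p'' ≠ q' := fin_ne_of_val_ne (by have := hc''.2.1; have := hc''.1; omega)
      exact vne _ this
    have hvne' : (π p' : ℕ) ≠ π q' := by
      have : p' ≠ q' := fin_ne_of_val_ne (by have := hc'.2.1; have := hc'.1; omega)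
      exact vne _ this
    omega
  · rw [tog_neg h]; exact ⟨x', p', hc', ht'⟩

lemma tog_P1_iff (q q' : Fin n) (hne : q' ≠ q) (π : Equiv.Perm (Fin n)) :
    P1 (tog q π) q' ↔ P1 π q' := by
  constructor
  · intro h
    have := tog_P1_of q q' hne (tog q π) h
    rwa [tog_invol q π] at this
  · exact tog_P1_of q q' hne π

lemma tog_P2_iff (q q' : Fin n) (hne : q' ≠ q) (π : Equiv.Perm (Fin n)) :
    P2 (tog q π) q' ↔ P2 π q' := by
  constructor
  · intro h
    have := tog_P2_of q q' hne (tog q π) h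
    rwa [tog_invol q π] at this
  · exact tog_P2_of q q' hne π

lemma tog_P1_at (q : Fin n) (π : Equiv.Perm (Fin n)) : P1 (tog q π) q ↔ P2 π q := by
  by_cases h : ∃ x p, Core π x p q
  · have hcore : Core π h.choose h.choose_spec.choose q := h.choose_spec.choose_spec
    set x := h.choose
    set p := h.choose_spec.choose
    have hpq : p ≠ q := fin_ne_of_val_ne (by have := hcore.2.1; omega)
    have hcs : Core (π * Equiv.swap p q) x p q := core_swap hcore
    rw [tog_pos h]
    constructor
    · rintro ⟨x₂, p₂, hc₂, ht₂⟩
      obtain ⟨e0, e1⟩ := core_unique hc₂ hcs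
      rw [e1] at ht₂
      rw [swap_p hpq, swap_q hpq] at ht₂
      exact ⟨x, p, hcore, ht₂⟩
    · rintro ⟨x₂, p₂, hc₂, ht₂⟩
      obtain ⟨e0, e1⟩ := core_unique hc₂ hcore
      rw [e1] at ht₂
      exact ⟨x, p, hcs, by rw [swap_p hpq, swap_q hpq]; exact ht₂⟩
  · rw [tog_neg h]
    exact iff_of_false (fun ⟨x, p, hc, _⟩ => h ⟨x, p, hc⟩) (fun ⟨x, p, hc, _⟩ => h ⟨x, p, hc⟩)

lemma tog_P2_at (q : Fin n) (π : Equiv.Perm (Fin n)) : P2 (tog q π) q ↔ P1 π q := by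
  constructor
  · intro h2
    have h1 := (tog_P1_at q (tog q π))
    rw [tog_invol q π] at h1
    exact h1.2 h2
  · intro h1
    have h2 := (tog_P1_at q (tog q π))
    rw [tog_invol q π] at h2
    exact h2.1 h1
lemma foldl_P (l : List (Fin n)) (hnd : l.Nodup) (π : Equiv.Perm (Fin n)) (q : Fin n) :
    (P1 (l.foldl (fun π q => tog q π) π) q ↔ if q ∈ l then P2 π q else P1 π q) ∧
    (P2 (l.foldl (fun π q => tog q π) π) q ↔ if q ∈ l then P1 π q else P2 π q) := by
  induction l generalizing π with
  | nil => simp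
  | cons a l ih =>
    have hnd' : l.Nodup := (List.nodup_cons.1 hnd).2
    have hna : a ∉ l := (List.nodup_cons.1 hnd).1
    rw [List.foldl_cons]
    obtain ⟨ih1, ih2⟩ := ih hnd' (tog a π)
    by_cases hq : q = a
    · subst hq
      have hql : q ∉ l := hna
      rw [if_neg hql] at ih1 ih2
      constructor
      · rw [if_pos (List.mem_cons_self : q ∈ q :: l), ih1]
        exact tog_P1_at q π
      · rw [if_pos (List.mem_cons_self : q ∈ q :: l), ih2]
        exact tog_P2_at q π
    · constructor
      · rw [ih1]
        by_cases hql : q ∈ l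
        · rw [if_pos hql, if_pos (by simp [hql])]
          exact tog_P2_iff a q hq π
        · rw [if_neg hql, if_neg (by simp [hq, hql])]
          exact tog_P1_iff a q hq π
      · rw [ih2]
        by_cases hql : q ∈ l
        · rw [if_pos hql, if_pos (by simp [hql])]
          exact tog_P1_iff a q hq π
        · rw [if_neg hql, if_neg (by simp [hq, hql])]
          exact tog_P2_iff a q hq π

/-- Toggle every position: this flips every occurrence between patterns 123 and 132. -/
noncomputable def Phi : Equiv.Perm (Fin n) → Equiv.Perm (Fin n) :=
  fun π => (List.finRange n).foldl (fun π q => tog q π) π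

/-- The inverse of `Phi`. -/
noncomputable def Psi : Equiv.Perm (Fin n) → Equiv.Perm (Fin n) :=
  fun π => ((List.finRange n).reverse).foldl (fun π q => tog q π) π

lemma foldl_rev_cancel (l : List (Fin n)) (π : Equiv.Perm (Fin n)) :
    (l.reverse).foldl (fun π q => tog q π) (l.foldl (fun π q => tog q π) π) = π := by
  induction l generalizing π with
  | nil => simp
  | cons a l ih =>
    rw [List.foldl_cons, List.reverse_cons, List.foldl_append, ih (tog a π)]
    simp [tog_invol a π]

lemma Psi_Phi (π : Equiv.Perm (Fin n)) : Psi (Phi π) = π := foldl_rev_cancel _ π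

lemma Phi_Psi (π : Equiv.Perm (Fin n)) : Phi (Psi π) = π := by
  have := foldl_rev_cancel ((List.finRange n).reverse) π
  rwa [List.reverse_reverse] at this

lemma Phi_P1 (π : Equiv.Perm (Fin n)) (q : Fin n) : P1 (Phi π) q ↔ P2 π q := by
  have := (foldl_P (List.finRange n) (List.nodup_finRange n) π q).1
  rwa [if_pos (List.mem_finRange q)] at this

lemma Phi_P2 (π : Equiv.Perm (Fin n)) (q : Fin n) : P2 (Phi π) q ↔ P1 π q := by
  have := (foldl_P (List.finRange n) (List.nodup_finRange n) π q).2
  rwa [if_pos (List.mem_finRange q)] at this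

lemma Psi_P1 (π : Equiv.Perm (Fin n)) (q : Fin n) : P1 (Psi π) q ↔ P2 π q := by
  have := (foldl_P ((List.finRange n).reverse) (List.nodup_reverse.2 (List.nodup_finRange n)) π q).1
  rwa [if_pos (List.mem_reverse.2 (List.mem_finRange q))] at this

lemma Psi_P2 (π : Equiv.Perm (Fin n)) (q : Fin n) : P2 (Psi π) q ↔ P1 π q := by
  have := (foldl_P ((List.finRange n).reverse) (List.nodup_reverse.2 (List.nodup_finRange n)) π q).2
  rwa [if_pos (List.mem_reverse.2 (List.mem_finRange q))] at this

lemma occ123_Phi (π : Equiv.Perm (Fin n)) :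
    occ perm123 SS (Phi π) = occ perm132 SS π := by
  rw [occ123_eq, occ132_eq]
  exact Nat.card_congr (Equiv.subtypeEquivRight (fun q => Phi_P1 π q))

lemma occ132_Phi (π : Equiv.Perm (Fin n)) :
    occ perm132 SS (Phi π) = occ perm123 SS π := by
  rw [occ132_eq, occ123_eq]
  exact Nat.card_congr (Equiv.subtypeEquivRight (fun q => Phi_P2 π q))

lemma occ123_Psi (π : Equiv.Perm (Fin n)) :
    occ perm123 SS (Psi π) = occ perm132 SS π := by
  rw [occ123_eq, occ132_eq]
  exact Nat.card_congr (Equiv.subtypeEquivRight (fun q => Psi_P1 π q))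

lemma occ132_Psi (π : Equiv.Perm (Fin n)) :
    occ perm132 SS (Psi π) = occ perm123 SS π := by
  rw [occ132_eq, occ123_eq]
  exact Nat.card_congr (Equiv.subtypeEquivRight (fun q => Psi_P2 π q))

end JE14

theorem statement_14 :
    JointlyEquidistributed perm123 ({(0, 0), (0, 1), (0, 2), (1, 2), (1, 3), (2, 2), (2, 3), (3, 0)} : Set (ℕ × ℕ))
      perm132 ({(0, 0), (0, 1), (0, 2), (1, 2), (1, 3), (2, 2), (2, 3), (3, 0)} : Set (ℕ × ℕ)) := by
  intro n k ℓ
  apply Nat.card_congr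
  refine
    { toFun := fun s => ⟨JE14.Phi s.1, ?_, ?_⟩
      invFun := fun s => ⟨JE14.Psi s.1, ?_, ?_⟩
      left_inv := fun s => Subtype.ext (JE14.Psi_Phi s.1)
      right_inv := fun s => Subtype.ext (JE14.Phi_Psi s.1) }
  · exact (JE14.occ123_Phi s.1).trans s.2.2
  · exact (JE14.occ132_Phi s.1).trans s.2.1
  · exact (JE14.occ123_Psi s.1).trans s.2.2
  · exact (JE14.occ132_Psi s.1).trans s.2.1
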